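/- Let L be a positive semidefinite n×n real matrix. Then the assignment P(S) = det(L_S) / det(L + I) for subsets S ⊆ {1,...,n} defines a probability distribution: P(S) ≥ 0 for all S and Σ_S P(S) = 1. -/

import Mathlib

lemma psd_det_nonneg {m : ℕ} {M : Matrix (Fin m) (Fin m) ℝ} (hM : M.PosSemidef) :
    0 ≤ M.det := by
  exact hM.det_nonneg

lemma piecewise_det {n : ℕ} (L : Matrix (Fin n) (Fin n) ℝ) (S : Finset (Fin n)) :
    Matrix.det (S.piecewise L (1 : Matrix (Fin n) (Fin n) ℝ)) =
      (L.submatrix (fun i : {x // x ∈ S} => (i : Fin n))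
        (fun j : {x // x ∈ S} => (j : Fin n))).det := by
  classical
  set e : {x // x ∈ S} ⊕ {x : Fin n // x ∉ S} ≃ Fin n := Equiv.sumCompl (· ∈ S)
  have h1 : Matrix.det (S.piecewise L (1 : Matrix (Fin n) (Fin n) ℝ)) =
      Matrix.det (Matrix.submatrix (S.piecewise L (1 : Matrix (Fin n) (Fin n) ℝ)) e e) :=
    (Matrix.det_submatrix_equiv_self e _).symm
  rw [h1]
  have : Matrix.submatrix (S.piecewise L (1 : Matrix (Fin n) (Fin n) ℝ)) e e =
      Matrix.fromBlocks
        (L.submatrix (fun i : {x // x ∈ S} => (i : Fin n))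
          (fun j : {x // x ∈ S} => (j : Fin n)))
        (L.submatrix (fun i : {x // x ∈ S} => (i : Fin n))
          (fun j : {x : Fin n // x ∉ S} => (j : Fin n)))
        0 1 := by
    ext i j
    rcases i with a | a <;> rcases j with b | b <;>
      simp only [Matrix.submatrix_apply, Matrix.fromBlocks_apply₁₁,
        Matrix.fromBlocks_apply₁₂, Matrix.fromBlocks_apply₂₁, Matrix.fromBlocks_apply₂₂,
        e, Equiv.sumCompl_apply_inl, Equiv.sumCompl_apply_inr]
    · simp [Matrix.submatrix, Finset.piecewise, a.2]
    · simp [Matrix.submatrix, Finset.piecewise, a.2]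
    · simp [Matrix.submatrix, Finset.piecewise, a.2]
      exact Matrix.one_apply_ne fun h : (a : Fin n) = (b : Fin n) => a.2 (h ▸ b.2)
    · simp [Matrix.submatrix, Finset.piecewise, a.2]
      simp [Matrix.one_apply, Subtype.ext_iff]
      congr
  rw [this, Matrix.det_fromBlocks_zero₂₁, Matrix.det_one, mul_one]

lemma sum_subsets_det {n : ℕ} (L : Matrix (Fin n) (Fin n) ℝ) :
    ∑ S : Finset (Fin n),
        (L.submatrix (fun i : {x // x ∈ S} => (i : Fin n))
          (fun j : {x // x ∈ S} => (j : Fin n))).det = (L + 1).det := by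
  classical
  have h := (Matrix.detRowAlternating :
      (Fin n → ℝ) [⋀^Fin n]→ₗ[ℝ] ℝ).toMultilinearMap.map_add_univ L (1 : Matrix (Fin n) (Fin n) ℝ)
  have h2 : (L + 1).det = ∑ S : Finset (Fin n),
      Matrix.det (S.piecewise L (1 : Matrix (Fin n) (Fin n) ℝ)) := h
  rw [h2]
  exact Finset.sum_congr rfl fun S _ => (piecewise_det L S).symm

/-- The L-ensemble assignment P(S) = det(L_S)/det(L+I) is a probability distribution. -/
theorem stmt8 (n : ℕ) (L : Matrix (Fin n) (Fin n) ℝ) (hL : L.PosSemidef) :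
    (∀ S : Finset (Fin n),
        0 ≤ (L.submatrix (fun i : {x // x ∈ S} => (i : Fin n))
              (fun j : {x // x ∈ S} => (j : Fin n))).det / (L + 1).det) ∧
      ∑ S : Finset (Fin n),
          (L.submatrix (fun i : {x // x ∈ S} => (i : Fin n))
            (fun j : {x // x ∈ S} => (j : Fin n))).det / (L + 1).det = 1 := by
  classical
  have hpos : 0 < (L + 1).det := (Matrix.PosDef.posSemidef_add hL Matrix.PosDef.one).det_pos
  constructor
  · intro S
    apply div_nonneg _ hpos.le
    have hsub := hL.submatrix (fun i : {x // x ∈ S} => (i : Fin n))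
    have : 0 ≤ (L.submatrix (fun i : {x // x ∈ S} => (i : Fin n))
        (fun j : {x // x ∈ S} => (j : Fin n))).det := by
      exact hsub.det_nonneg
    exact this
  · rw [← Finset.sum_div, sum_subsets_det, div_self hpos.ne']
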